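/- Starting from a legitimate state of the delay/relay protocol (every token is queued, all q ≤ 1, pairwise clockwise token distances exceed C, and each delay process's counter records the clockwise distance to the nearest approaching token as cᵢ = C - Rdistᵢ when cᵢ > 0 and qᵢ = 0, cᵢ = C when qᵢ = 1), executing one global round yields another legitimate state. -/
import Mathlib


/-- Global state of the delay/relay ring protocol. -/
structure St (n : ℕ) where
  r : ZMod n → ℕ
  q : ZMod n → ℕ
  c : ZMod n → ℕ

/-- Release condition of process `i`: a delay process (member of `D`) releases
when its counter is `0` and it has a token; a relay process releases whenever
it has a token (counting the token arriving from the predecessor). -/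
def rel {n : ℕ} (D : Finset (ZMod n)) (σ : St n) (i : ZMod n) : Prop :=
  if i ∈ D then σ.c i = 0 ∧ 0 < σ.r i + σ.q (i - 1)
  else 0 < σ.r i + σ.q (i - 1)

instance {n : ℕ} (D : Finset (ZMod n)) (σ : St n) (i : ZMod n) :
    Decidable (rel D σ i) := by unfold rel; infer_instance

/-- One synchronous global round of the delay/relay protocol: every process
absorbs the predecessor's queued token, the predecessor's queue is zeroed,
and a process enqueues (at most) one token when its release condition holds;
a delay process resets its counter to `C` upon release and otherwise
decrements it when positive. -/
def roundFn {n : ℕ} (D : Finset (ZMod n)) (C : ℕ) (σ : St n) : St n where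
  r := fun i => σ.r i + σ.q (i - 1) - (if rel D σ i then 1 else 0)
  q := fun i => if rel D σ i then 1 else 0
  c := fun i => if i ∈ D then (if rel D σ i then C else σ.c i - 1) else σ.c i

/-- Process `i` holds a token. -/
def tok {n : ℕ} (σ : St n) (i : ZMod n) : Prop := 0 < σ.r i + σ.q i

/-- Minimum clockwise distance from `i` to a process holding a token. -/
noncomputable def Rdist {n : ℕ} (σ : St n) (i : ZMod n) : ℕ :=
  sInf {d : ℕ | tok σ (i + (d : ZMod n))}

/-- Minimum counterclockwise distance from `i` to a process holding a token. -/
noncomputable def Ldist {n : ℕ} (σ : St n) (i : ZMod n) : ℕ :=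
  sInf {d : ℕ | tok σ (i - (d : ZMod n))}

/-- Minimum positive clockwise distance between token-holding processes. -/
noncomputable def tokdist {n : ℕ} (σ : St n) : ℕ :=
  sInf {d : ℕ | 0 < d ∧ ∃ i : ZMod n, tok σ i ∧ tok σ (i + (d : ZMod n))}

/-- Legitimate state: all `m` tokens are queued (none resting), queues are
`0/1`-valued, pairwise clockwise token distances exceed `C`, and the counter
of each delay process records the clockwise distance of the nearest
approaching token. -/
noncomputable def Legit {n : ℕ} [NeZero n] (D : Finset (ZMod n)) (C m : ℕ) (σ : St n) : Prop :=
  (∑ i : ZMod n, σ.q i) = m ∧ (∑ i : ZMod n, σ.r i) = 0 ∧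
  (∀ i : ZMod n, σ.q i ≤ 1) ∧
  C < tokdist σ ∧
  (∀ i ∈ D, 0 < σ.c i → σ.q i = 0 → Rdist σ i = C - σ.c i) ∧
  (∀ i ∈ D, σ.q i = 0 → σ.c i < Ldist σ i) ∧
  (∀ i ∈ D, σ.q i = 1 → σ.c i = C)

/-- Closure: starting from a legitimate state of the delay/relay protocol,
executing one global round yields another legitimate state. -/
theorem stmt_7 (n m C : ℕ) [NeZero n] (D : Finset (ZMod n))
    (hm : 1 ≤ m) (hsep : m * (C + 1) ≤ n) (σ : St n)
    (hσ : Legit D C m σ) : Legit D C m (roundFn D C σ) := by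
  obtain ⟨hqs, hrs, hq1, htd, h5, h6, h7⟩ := hσ
  have hr0 : ∀ i, σ.r i = 0 := fun i =>
    (Finset.sum_eq_zero_iff.mp hrs) i (Finset.mem_univ i)
  have htok : ∀ i, tok σ i ↔ σ.q i = 1 := by
    intro i; have := hq1 i; unfold tok; rw [hr0 i]; omega
  have hex : ∃ j, σ.q j = 1 := by
    by_contra h
    push_neg at h
    have hz : (∑ i : ZMod n, σ.q i) = 0 :=
      Finset.sum_eq_zero (fun i _ => by have := hq1 i; have := h i; omega)
    rw [hqs] at hz; omega
  have hsurjR : ∀ (a b : ZMod n), ∃ d : ℕ, a + (d : ZMod n) = b := by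
    intro a b
    obtain ⟨d, hd⟩ := ZMod.natCast_zmod_surjective (b - a)
    exact ⟨d, by rw [hd]; ring⟩
  have hsurjL : ∀ (a b : ZMod n), ∃ d : ℕ, a - (d : ZMod n) = b := by
    intro a b
    obtain ⟨d, hd⟩ := ZMod.natCast_zmod_surjective (a - b)
    exact ⟨d, by rw [hd]; ring⟩
  have hRne : ∀ i : ZMod n, {d : ℕ | tok σ (i + (d : ZMod n))}.Nonempty := by
    intro i
    obtain ⟨j, hj⟩ := hex
    obtain ⟨d, hd⟩ := hsurjR i j
    exact ⟨d, by show tok σ (i + (d : ZMod n)); rw [hd]; exact (htok j).mpr hj⟩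
  have hLne : ∀ i : ZMod n, {d : ℕ | tok σ (i - (d : ZMod n))}.Nonempty := by
    intro i
    obtain ⟨j, hj⟩ := hex
    obtain ⟨d, hd⟩ := hsurjL i j
    exact ⟨d, by show tok σ (i - (d : ZMod n)); rw [hd]; exact (htok j).mpr hj⟩
  have hrelc : ∀ i, rel D σ i ↔ σ.q (i - 1) = 1 := by
    intro i
    have hq1' := hq1 (i - 1)
    unfold rel
    split
    case isTrue hiD =>
      constructor
      · rintro ⟨-, h⟩; rw [hr0 i] at h; omega
      · intro h
        refine ⟨?_, by rw [hr0 i]; omega⟩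
        by_cases hqi : σ.q i = 1
        · have hC := h7 i hiD hqi
          have ht1 : tokdist σ ≤ 1 := by
            apply Nat.sInf_le
            refine ⟨one_pos, i - 1, (htok _).mpr h, ?_⟩
            show tok σ (i - 1 + ((1:ℕ) : ZMod n))
            have he : i - 1 + ((1:ℕ) : ZMod n) = i := by push_cast; ring
            rw [he]; exact (htok _).mpr hqi
          omega
        · have hqi0 : σ.q i = 0 := by have := hq1 i; omega
          have hh := h6 i hiD hqi0
          have hL1 : Ldist σ i ≤ 1 := by
            apply Nat.sInf_le
            show tok σ (i - ((1:ℕ) : ZMod n))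
            have he : i - ((1:ℕ) : ZMod n) = i - 1 := by push_cast; ring
            rw [he]; exact (htok _).mpr h
          omega
    case isFalse => rw [hr0 i]; omega
  have hq' : ∀ i, (roundFn D C σ).q i = σ.q (i - 1) := by
    intro i
    show (if rel D σ i then 1 else 0) = σ.q (i - 1)
    have := hq1 (i - 1)
    by_cases h : rel D σ i
    · simp only [h, if_true]; exact ((hrelc i).mp h).symm
    · simp only [h, if_false]
      have : ¬ σ.q (i - 1) = 1 := fun hh => h ((hrelc i).mpr hh)
      omega
  have hr' : ∀ i, (roundFn D C σ).r i = 0 := by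
    intro i
    show σ.r i + σ.q (i - 1) - (if rel D σ i then 1 else 0) = 0
    rw [hr0 i]
    have := hq1 (i - 1)
    by_cases h : rel D σ i
    · have := (hrelc i).mp h; simp only [h, if_true]; omega
    · have : ¬ σ.q (i - 1) = 1 := fun hh => h ((hrelc i).mpr hh)
      simp only [h, if_false]; omega
  have htok' : ∀ i, tok (roundFn D C σ) i ↔ σ.q (i - 1) = 1 := by
    intro i
    unfold tok
    rw [hr' i, hq' i]
    have := hq1 (i - 1)
    omega
  have hRset : ∀ i : ZMod n, Rdist (roundFn D C σ) i = Rdist σ (i - 1) := by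
    intro i
    unfold Rdist
    congr 1
    ext d
    simp only [Set.mem_setOf_eq]
    rw [htok' (i + d), htok (i - 1 + d)]
    have he : i + (d : ZMod n) - 1 = i - 1 + (d : ZMod n) := by ring
    rw [he]
  have hLset : ∀ i : ZMod n, Ldist (roundFn D C σ) i = Ldist σ (i - 1) := by
    intro i
    unfold Ldist
    congr 1
    ext d
    simp only [Set.mem_setOf_eq]
    rw [htok' (i - d), htok (i - 1 - d)]
    have he : i - (d : ZMod n) - 1 = i - 1 - (d : ZMod n) := by ring
    rw [he]
  have htdset : tokdist (roundFn D C σ) = tokdist σ := by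
    unfold tokdist
    congr 1
    ext d
    simp only [Set.mem_setOf_eq]
    constructor
    · rintro ⟨hd, i, h1, h2⟩
      refine ⟨hd, i - 1, (htok _).mpr ((htok' i).mp h1), ?_⟩
      have := (htok' (i + d)).mp h2
      have he : i + (d : ZMod n) - 1 = i - 1 + (d : ZMod n) := by ring
      rw [he] at this
      exact (htok _).mpr this
    · rintro ⟨hd, i, h1, h2⟩
      refine ⟨hd, i + 1, (htok' _).mpr (by rw [add_sub_cancel_right]; exact (htok _).mp h1), ?_⟩
      apply (htok' _).mpr
      have he : i + 1 + (d : ZMod n) - 1 = i + (d : ZMod n) := by ring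
      rw [he]
      exact (htok _).mp h2
  refine ⟨?_, ?_, ?_, ?_, ?_, ?_, ?_⟩
  · calc (∑ i : ZMod n, (roundFn D C σ).q i) = ∑ i : ZMod n, σ.q (i - 1) :=
          Finset.sum_congr rfl (fun i _ => hq' i)
      _ = ∑ i : ZMod n, σ.q i :=
          Fintype.sum_equiv (Equiv.subRight (1 : ZMod n)) _ _ (fun i => rfl)
      _ = m := hqs
  · exact Finset.sum_eq_zero (fun i _ => hr' i)
  · intro i
    rw [hq' i]
    exact hq1 _
  · rw [htdset]; exact htd
  · -- counter/Rdist condition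
    intro i hiD hc hq0
    rw [hq' i] at hq0
    have hnrel : ¬ rel D σ i := fun h => by rw [hrelc i] at h; omega
    have hc' : (roundFn D C σ).c i = σ.c i - 1 := by
      show (if i ∈ D then (if rel D σ i then C else σ.c i - 1) else σ.c i) = σ.c i - 1
      simp [hiD, hnrel]
    rw [hc'] at hc ⊢
    rw [hRset i]
    by_cases hqi : σ.q i = 1
    · have hC := h7 i hiD hqi
      have hle : Rdist σ (i - 1) ≤ 1 := by
        apply Nat.sInf_le
        show tok σ (i - 1 + ((1:ℕ) : ZMod n))
        have he : i - 1 + ((1:ℕ) : ZMod n) = i := by push_cast; ring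
        rw [he]; exact (htok _).mpr hqi
      have hmem : tok σ (i - 1 + ((Rdist σ (i - 1) : ℕ) : ZMod n)) := Nat.sInf_mem (hRne (i - 1))
      have hne : Rdist σ (i - 1) ≠ 0 := by
        intro h0
        rw [h0] at hmem
        rw [Nat.cast_zero, add_zero] at hmem
        have := (htok _).mp hmem
        omega
      omega
    · have hqi0 : σ.q i = 0 := by have := hq1 i; omega
      have h5i : Rdist σ i = C - σ.c i := h5 i hiD (by omega) hqi0
      have hmem : tok σ (i + ((Rdist σ i : ℕ) : ZMod n)) := Nat.sInf_mem (hRne i)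
      have hd1 : Rdist σ i ≠ 0 := by
        intro h0
        rw [h0, Nat.cast_zero, add_zero] at hmem
        have := (htok _).mp hmem
        omega
      have hmem' : tok σ (i - 1 + ((Rdist σ (i - 1) : ℕ) : ZMod n)) := Nat.sInf_mem (hRne (i - 1))
      have he0 : Rdist σ (i - 1) ≠ 0 := by
        intro h0
        rw [h0, Nat.cast_zero, add_zero] at hmem'
        have := (htok _).mp hmem'
        omega
      have hup : Rdist σ (i - 1) ≤ Rdist σ i + 1 := by
        apply Nat.sInf_le
        show tok σ (i - 1 + ((Rdist σ i + 1 : ℕ) : ZMod n))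
        have he : i - 1 + ((Rdist σ i + 1 : ℕ) : ZMod n) = i + ((Rdist σ i : ℕ) : ZMod n) := by
          push_cast; ring
        rw [he]; exact hmem
      have hlo : Rdist σ i ≤ Rdist σ (i - 1) - 1 := by
        apply Nat.sInf_le
        show tok σ (i + ((Rdist σ (i - 1) - 1 : ℕ) : ZMod n))
        have he : i + ((Rdist σ (i - 1) - 1 : ℕ) : ZMod n)
            = i - 1 + ((Rdist σ (i - 1) : ℕ) : ZMod n) := by
          rw [Nat.cast_sub (by omega : 1 ≤ Rdist σ (i - 1)), Nat.cast_one]; ring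
        rw [he]; exact hmem'
      omega
  · -- counter/Ldist condition
    intro i hiD hq0
    rw [hq' i] at hq0
    have hnrel : ¬ rel D σ i := fun h => by rw [hrelc i] at h; omega
    have hc' : (roundFn D C σ).c i = σ.c i - 1 := by
      show (if i ∈ D then (if rel D σ i then C else σ.c i - 1) else σ.c i) = σ.c i - 1
      simp [hiD, hnrel]
    rw [hc', hLset i]
    have hmem' : tok σ (i - 1 - ((Ldist σ (i - 1) : ℕ) : ZMod n)) := Nat.sInf_mem (hLne (i - 1))
    have he0 : Ldist σ (i - 1) ≠ 0 := by
      intro h0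
      rw [h0, Nat.cast_zero, sub_zero] at hmem'
      have := (htok _).mp hmem'
      omega
    by_cases hqi : σ.q i = 1
    · have hC := h7 i hiD hqi
      have htd2 : tokdist σ ≤ Ldist σ (i - 1) + 1 := by
        apply Nat.sInf_le
        refine ⟨by omega, i - 1 - ((Ldist σ (i - 1) : ℕ) : ZMod n), hmem', ?_⟩
        show tok σ (i - 1 - ((Ldist σ (i - 1) : ℕ) : ZMod n) + ((Ldist σ (i - 1) + 1 : ℕ) : ZMod n))
        have he : i - 1 - ((Ldist σ (i - 1) : ℕ) : ZMod n) + ((Ldist σ (i - 1) + 1 : ℕ) : ZMod n)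
            = i := by push_cast; ring
        rw [he]; exact (htok _).mpr hqi
      omega
    · have hqi0 : σ.q i = 0 := by have := hq1 i; omega
      have hL := h6 i hiD hqi0
      have hlo : Ldist σ i ≤ Ldist σ (i - 1) + 1 := by
        apply Nat.sInf_le
        show tok σ (i - ((Ldist σ (i - 1) + 1 : ℕ) : ZMod n))
        have he : i - ((Ldist σ (i - 1) + 1 : ℕ) : ZMod n)
            = i - 1 - ((Ldist σ (i - 1) : ℕ) : ZMod n) := by push_cast; ring
        rw [he]; exact hmem'
      omega
  · -- release resets counter
    intro i hiD hq1'
    rw [hq' i] at hq1'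
    have hrel : rel D σ i := (hrelc i).mpr hq1'
    show (if i ∈ D then (if rel D σ i then C else σ.c i - 1) else σ.c i) = C
    simp [hiD, hrel]
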